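/- For all positive integers r and m, there exists a positive integer n such that for every coloring of the vertex set {0,1}ⁿ ⊂ ℝⁿ of the n-dimensional unit hypercube with at most r colors (i.e., every function χ : {0,1}ⁿ → Fin r), there exists a monochromatic isometric copy of {0, √2}^m (the vertex set of an m-dimensional hypercube of sidelength √2) inside {0,1}ⁿ. -/

import Mathlib

open Finset

lemma hd_sum {k : ℕ} (x y : Fin k → Bool) :
    hammingDist x y = ∑ i, if x i ≠ y i then 1 else 0 := by
  rw [hammingDist, Finset.card_filter]

lemma hd_append {a b : ℕ} (u u' : Fin a → Bool) (v v' : Fin b → Bool) :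
    hammingDist (Fin.append u v) (Fin.append u' v') = hammingDist u u' + hammingDist v v' := by
  simp_rw [hd_sum, Fin.sum_univ_add, Fin.append_left, Fin.append_right]

def unitv {N : ℕ} (j : Fin N) : Fin N → Bool := fun t => decide (t = j)

lemma hd_unitv {N : ℕ} {j j' : Fin N} (h : j ≠ j') :
    hammingDist (unitv j) (unitv j') = 2 := by
  rw [hammingDist]
  have : ({i | unitv j i ≠ unitv j' i} : Finset (Fin N)) = {j, j'} := by
    ext t
    by_cases h1 : t = j <;> by_cases h2 : t = j' <;> simp_all [unitv]
  rw [this, Finset.card_pair h]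

lemma core : ∀ (m : ℕ) (κ : Type) [Fintype κ], ∃ n, 0 < n ∧
    ∀ χ : (Fin n → Bool) → κ, ∃ g : (Fin m → Bool) → Fin n → Bool,
      (∀ x y, hammingDist (g x) (g y) = 2 * hammingDist x y) ∧
      ∀ x y, χ (g x) = χ (g y) := by
  intro m
  induction m with
  | zero =>
    intro κ _
    refine ⟨1, one_pos, fun χ => ⟨fun _ _ => false, fun x y => ?_, fun x y => ?_⟩⟩
    · have hxy : x = y := funext fun i => i.elim0
      subst hxy; simp
    · rfl
  | succ m ih =>
    intro κ _
    set N := Fintype.card κ + 1 with hN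
    obtain ⟨n, hn, H⟩ := ih (Fin N → κ)
    refine ⟨n + N, by positivity, fun χ => ?_⟩
    set χ' : (Fin n → Bool) → (Fin N → κ) :=
      fun u => fun j => χ (Fin.append u (unitv j)) with hχ'
    obtain ⟨g₀, hg₀d, hg₀c⟩ := H χ'
    set z₀ : Fin m → Bool := fun _ => false with hz₀
    set d : Fin N → κ := χ' (g₀ z₀) with hd
    obtain ⟨j, j', hjj, hdeq⟩ := Fintype.exists_ne_map_eq_of_card_lt d (by simp [hN])
    set g : (Fin (m + 1) → Bool) → Fin (n + N) → Bool :=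
      fun x => Fin.append (g₀ (fun i : Fin m => x i.castSucc))
        (unitv (if x (Fin.last m) then j else j')) with hg
    have keycol : ∀ x : Fin (m + 1) → Bool, χ (g x) = d j := by
      intro x
      have h1 : χ (g x) = d (if x (Fin.last m) then j else j') := by
        have := congrFun (hg₀c (fun i : Fin m => x i.castSucc) z₀) (if x (Fin.last m) then j else j')
        simpa [hg, hχ', hd] using this
      rw [h1]
      cases hxl : x (Fin.last m) <;> simp [hdeq]
    refine ⟨g, fun x y => ?_, fun x y => by rw [keycol, keycol]⟩
    have hsplit : hammingDist (g x) (g y) =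
        hammingDist (g₀ (fun i : Fin m => x i.castSucc)) (g₀ (fun i : Fin m => y i.castSucc)) +
        hammingDist (unitv (if x (Fin.last m) then j else j'))
          (unitv (if y (Fin.last m) then j else j')) := hd_append _ _ _ _
    have hx : hammingDist x y =
        hammingDist (fun i : Fin m => x i.castSucc) (fun i : Fin m => y i.castSucc) +
        (if x (Fin.last m) ≠ y (Fin.last m) then 1 else 0) := by
      simp_rw [hd_sum, Fin.sum_univ_castSucc]
    rw [hsplit, hg₀d, hx]
    cases hxl : x (Fin.last m) <;> cases hyl : y (Fin.last m) <;>
      simp [hxl, hyl, hd_unitv hjj, hd_unitv (Ne.symm hjj), Nat.mul_add]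

/-- The vertex set `{0, s}^m ⊂ ℝ^m` of an `m`-dimensional hypercube of sidelength `s`. -/
def cubeVertices (m : ℕ) (s : ℝ) : Set (EuclideanSpace ℝ (Fin m)) :=
  {x | ∀ i, x i = 0 ∨ x i = s}

noncomputable def emb {n : ℕ} (u : Fin n → Bool) : EuclideanSpace ℝ (Fin n) :=
  WithLp.toLp 2 (fun j => if u j then (1 : ℝ) else 0)

lemma dist_emb {n : ℕ} (u v : Fin n → Bool) :
    dist (emb u) (emb v) = Real.sqrt (hammingDist u v) := by
  rw [EuclideanSpace.dist_eq, hd_sum]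
  congr 1
  push_cast
  refine Finset.sum_congr rfl fun i _ => ?_
  cases hu : u i <;> cases hv : v i <;>
    simp [emb, hu, hv, Real.dist_eq]

noncomputable def bmap {m : ℕ} (x : EuclideanSpace ℝ (Fin m)) : Fin m → Bool :=
  fun i => decide (x i ≠ 0)

lemma dist_cube {m : ℕ} {x y : EuclideanSpace ℝ (Fin m)}
    (hx : x ∈ cubeVertices m (Real.sqrt 2)) (hy : y ∈ cubeVertices m (Real.sqrt 2)) :
    dist x y = Real.sqrt (2 * hammingDist (bmap x) (bmap y)) := by
  have hs2 : Real.sqrt 2 ≠ 0 := by positivity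
  rw [EuclideanSpace.dist_eq, hd_sum]
  congr 1
  push_cast
  rw [Finset.mul_sum]
  refine Finset.sum_congr rfl fun i _ => ?_
  have h2 : Real.sqrt 2 ^ 2 = 2 := Real.sq_sqrt (by norm_num)
  rcases hx i with h1 | h1 <;> rcases hy i with h3 | h3 <;>
    simp [bmap, h1, h3, hs2, Real.dist_eq, abs_of_nonneg, Real.sqrt_nonneg, h2]

/-- For all positive `r, m` there exists `n` such that every `r`-coloring of the vertex
set `{0,1}ⁿ` of the unit hypercube contains a monochromatic isometric copy of
`{0, √2}^m`. -/
theorem mono_cube_r_colorings (r m : ℕ) (hr : 0 < r) (hm : 0 < m) :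
    ∃ n : ℕ, 0 < n ∧
      ∀ χ : EuclideanSpace ℝ (Fin n) → Fin r,
        ∃ f : EuclideanSpace ℝ (Fin m) → EuclideanSpace ℝ (Fin n),
          Set.InjOn f (cubeVertices m (Real.sqrt 2)) ∧
          (∀ x ∈ cubeVertices m (Real.sqrt 2), f x ∈ cubeVertices n 1) ∧
          (∀ x ∈ cubeVertices m (Real.sqrt 2), ∀ y ∈ cubeVertices m (Real.sqrt 2),
            dist (f x) (f y) = dist x y) ∧
          (∀ x ∈ cubeVertices m (Real.sqrt 2), ∀ y ∈ cubeVertices m (Real.sqrt 2),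
            χ (f x) = χ (f y)) := by
  obtain ⟨n, hn, H⟩ := core m (Fin r)
  refine ⟨n, hn, fun χ => ?_⟩
  obtain ⟨g, hgd, hgc⟩ := H (fun u => χ (emb u))
  set f : EuclideanSpace ℝ (Fin m) → EuclideanSpace ℝ (Fin n) :=
    fun x => emb (g (bmap x)) with hf
  have hdist : ∀ x ∈ cubeVertices m (Real.sqrt 2), ∀ y ∈ cubeVertices m (Real.sqrt 2),
      dist (f x) (f y) = dist x y := by
    intro x hx y hy
    rw [hf, dist_emb, hgd, dist_cube hx hy]
    push_cast
    ring_nf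
  refine ⟨f, ?_, ?_, hdist, fun x _ y _ => hgc (bmap x) (bmap y)⟩
  · intro x hx y hy hxy
    have : dist x y = 0 := by
      rw [← hdist x hx y hy, hxy, dist_self]
    exact dist_eq_zero.mp this
  · intro x _
    simp only [cubeVertices, Set.mem_setOf_eq, hf, emb]
    intro j
    cases g (bmap x) j <;> simp
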